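/- arXiv:1102.5226 — 7 statements merged into one kernel-verified Lean document; each statement's English description precedes it below -/
import Mathlib

section
/- Let q be a complex number that is not a root of unity and q ≠ 1 (equivalently, q^n ≠ 1 for all nonzero integers n). Suppose γ : ℤ × ℤ → ℂ is a function with finite support satisfying (1 - q^n)·γ(m-1, n) = (q^(1-n) - 1)·γ(m, n) for all integers m, n. Then γ is identically zero. -/
theorem stmt_0 (q : ℂ) (hq : ∀ n : ℤ, n ≠ 0 → q ^ n ≠ 1)
    (γ : ℤ × ℤ → ℂ) (hfin : (Function.support γ).Finite)
    (hrec : ∀ m n : ℤ, (1 - q ^ n) * γ (m - 1, n) = (q ^ (1 - n) - 1) * γ (m, n)) :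
    γ = 0 := by
  funext p
  obtain ⟨m, n⟩ := p
  by_contra h
  simp only [Pi.zero_apply] at h
  rcases eq_or_ne n 0 with rfl | hn0
  · have hr := hrec m 0
    have hq1 : q ^ (1 : ℤ) - 1 ≠ 0 := sub_ne_zero.mpr (hq 1 one_ne_zero)
    simp only [zpow_zero, sub_self, zero_mul, sub_zero] at hr
    exact h (by
      have := (mul_eq_zero.mp hr.symm).resolve_left hq1
      exact this)
  rcases eq_or_ne n 1 with rfl | hn1
  · have hr := hrec (m + 1) 1
    have e : (m + 1 : ℤ) - 1 = m := by ring
    rw [e] at hr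
    simp only [sub_self, zpow_zero, zero_mul] at hr
    have hA : (1 : ℂ) - q ^ (1 : ℤ) ≠ 0 := sub_ne_zero.mpr (Ne.symm (hq 1 one_ne_zero))
    exact h ((mul_eq_zero.mp hr).resolve_left hA)
  · have hA : (1 : ℂ) - q ^ n ≠ 0 := sub_ne_zero.mpr (Ne.symm (hq n hn0))
    have key : ∀ k : ℕ, γ (m + k, n) ≠ 0 := by
      intro k
      induction k with
      | zero => simpa using h
      | succ k ih =>
        intro hz
        have hr := hrec (m + k + 1) n
        have e : (m + (k : ℤ) + 1) - 1 = m + k := by ring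
        rw [e] at hr
        have e2 : (m + ((k : ℕ) + 1 : ℕ) : ℤ) = m + (k : ℤ) + 1 := by push_cast; ring
        rw [e2] at hz
        rw [hz, mul_zero] at hr
        exact (mul_ne_zero hA ih) hr
    have hinf : (Function.support γ).Infinite := by
      apply Set.infinite_of_injective_forall_mem
        (f := fun k : ℕ => ((m + (k : ℤ), n) : ℤ × ℤ))
      · intro a b hab
        simp only [Prod.mk.injEq, add_right_inj, Int.natCast_inj] at hab
        exact hab.1
      · intro k
        exact key k
    exact hinf hfin
end

section
/- Let q be a complex number with q^n ≠ 1 for all nonzero integers n. Suppose η : ℤ × ℤ → ℂ has finite support and satisfies (q^m - 1)·η(m, n-1) = (1 - q^(1-m))·η(m, n) for all integers m, n. Then η is identically zero. -/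
theorem stmt_1 (q : ℂ) (hq : ∀ n : ℤ, n ≠ 0 → q ^ n ≠ 1)
    (η : ℤ × ℤ → ℂ) (hfin : (Function.support η).Finite)
    (hrec : ∀ m n : ℤ, (q ^ m - 1) * η (m, n - 1) = (1 - q ^ (1 - m)) * η (m, n)) :
    η = 0 := by
  funext p
  obtain ⟨m, n⟩ := p
  by_contra h
  simp only [Pi.zero_apply] at h
  have hq1 : q ≠ 1 := by
    have := hq 1 one_ne_zero
    simpa using this
  rcases eq_or_ne m 0 with rfl | hm0
  · have h0 := hrec 0 n
    simp only [zpow_zero, sub_self, zero_mul, sub_zero, zpow_one] at h0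
    have : η (0, n) = 0 := by
      rcases mul_eq_zero.mp h0.symm with h1 | h1
      · exact absurd (by linear_combination -h1) hq1
      · exact h1
    exact h this
  rcases eq_or_ne m 1 with rfl | hm1
  · have h0 := hrec 1 (n + 1)
    simp only [sub_self, zpow_zero, sub_self, zero_mul, add_sub_cancel_right, zpow_one] at h0
    have : η (1, n) = 0 := by
      rcases mul_eq_zero.mp h0 with h1 | h1
      · exact absurd (by linear_combination h1) hq1
      · exact h1
    exact h this
  have hA : q ^ m - 1 ≠ 0 := sub_ne_zero.mpr (hq m hm0)
  have hB : 1 - q ^ (1 - m) ≠ 0 := by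
    have := hq (1 - m) (by omega)
    intro hc
    exact this (by linear_combination -hc)
  have key : ∀ k : ℕ, η (m, n + k) ≠ 0 := by
    intro k
    induction k with
    | zero => simpa using h
    | succ k ih =>
      have h0 := hrec m (n + k + 1)
      have he : (n : ℤ) + k + 1 - 1 = n + k := by ring
      rw [he] at h0
      intro hc
      have : (n : ℤ) + (k + 1 : ℕ) = n + k + 1 := by push_cast; ring
      rw [this] at hc
      rw [hc, mul_zero] at h0
      exact mul_ne_zero hA ih h0
  have hinj : Function.Injective (fun k : ℕ => ((m, n + k) : ℤ × ℤ)) := by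
    intro a b hab
    simp only [Prod.mk.injEq] at hab
    omega
  exact (Set.infinite_of_injective_forall_mem hinj key) hfin
end

section
/- Let q be a nonzero complex number with q^n ≠ 1 for all nonzero integers n. Suppose g : ℤ × ℤ → ℂ has finite support and satisfies q^(-2m)·g(m, n) = q^m·g(m, n-2) + (q^(-m) - 1)·g(m, n-1) for all integers m, n. Then g is identically zero. -/
theorem stmt_2 (q : ℂ) (hq0 : q ≠ 0) (hq : ∀ n : ℤ, n ≠ 0 → q ^ n ≠ 1)
    (g : ℤ × ℤ → ℂ) (hfin : (Function.support g).Finite)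
    (hrec : ∀ m n : ℤ,
      q ^ (-2 * m) * g (m, n) = q ^ m * g (m, n - 2) + (q ^ (-m) - 1) * g (m, n - 1)) :
    g = 0 := by
  funext p
  obtain ⟨m, n⟩ := p
  by_contra h
  have hSfin : {k : ℤ | g (m, k) ≠ 0}.Finite := by
    have : {k : ℤ | g (m, k) ≠ 0} ⊆ (fun k : ℤ => (m, k)) ⁻¹' Function.support g := by
      intro k hk; exact hk
    exact Set.Finite.subset (hfin.preimage (fun a _ b _ hab => by simpa using hab)) this
  have hne : hSfin.toFinset.Nonempty := ⟨n, by simpa using h⟩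
  set N := hSfin.toFinset.min' hne with hN
  have hNmem : g (m, N) ≠ 0 := by
    have := hSfin.toFinset.min'_mem hne
    simpa using this
  have hz : ∀ k : ℤ, k < N → g (m, k) = 0 := by
    intro k hk
    by_contra hk0
    have : N ≤ k := hSfin.toFinset.min'_le k (by simpa using hk0)
    omega
  have h1 := hrec m N
  rw [hz (N - 2) (by omega), hz (N - 1) (by omega)] at h1
  simp only [mul_zero, add_zero] at h1
  exact hNmem ((mul_eq_zero.mp h1).resolve_left (zpow_ne_zero _ hq0))
end

section
/- Let q be a nonzero complex number with q^n ≠ 1 for all nonzero integers n. Suppose h : ℤ × ℤ → ℂ has finite support and satisfies q^(-2n)·h(m, n) = q^n·h(m-2, n) + (q^(-n) - 1)·h(m-1, n) for all integers m, n. Then h is identically zero. -/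
theorem stmt_3 (q : ℂ) (hq0 : q ≠ 0) (hq : ∀ n : ℤ, n ≠ 0 → q ^ n ≠ 1)
    (h : ℤ × ℤ → ℂ) (hfin : (Function.support h).Finite)
    (hrec : ∀ m n : ℤ,
      q ^ (-2 * n) * h (m, n) = q ^ n * h (m - 2, n) + (q ^ (-n) - 1) * h (m - 1, n)) :
    h = 0 := by
  have key : ∀ n m : ℤ, h (m, n) = 0 := by
    intro n
    have hTfin : {m : ℤ | h (m, n) ≠ 0}.Finite := by
      apply Set.Finite.of_finite_image (f := fun m => ((m, n) : ℤ × ℤ))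
      · apply hfin.subset
        rintro ⟨a, b⟩ ⟨m, hm, heq⟩
        simp only at heq
        rw [← heq]
        exact hm
      · intro a _ b _ hab
        exact (Prod.mk.injEq _ _ _ _).mp hab |>.1
    obtain ⟨M, hM⟩ := hTfin.bddBelow
    have hbelow : ∀ x : ℤ, x < M → h (x, n) = 0 := by
      intro x hx
      by_contra hx0
      exact absurd (hM hx0) (not_le.mpr hx)
    have step : ∀ x : ℤ, h (x - 2, n) = 0 → h (x - 1, n) = 0 → h (x, n) = 0 := by
      intro x h2 h1
      have hr := hrec x n
      rw [h2, h1, mul_zero, mul_zero, add_zero] at hr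
      rcases mul_eq_zero.mp hr with h' | h'
      · exact absurd h' (zpow_ne_zero _ hq0)
      · exact h'
    have main : ∀ k : ℕ, ∀ x : ℤ, x < M + k → h (x, n) = 0 := by
      intro k
      induction k with
      | zero => intro x hx; exact hbelow x (by simpa using hx)
      | succ k ih =>
        intro x hx
        have hle : x ≤ M + k := by push_cast at hx ⊢; omega
        rcases lt_or_eq_of_le hle with h' | h'
        · exact ih x h'
        · exact step x (ih _ (by omega)) (ih _ (by omega))
    intro m
    have hm : m < M + ((m - M).toNat + 1 : ℕ) := by
      have := Int.self_le_toNat (m - M)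
      push_cast
      omega
    exact main _ m hm
  funext p
  exact key p.2 p.1
end

section
/- Let q be a nonzero complex number with q^n ≠ 1 for all nonzero integers n. Suppose G : ℤ × ℤ → ℂ has finite support and satisfies (q^m - q^n)·G(m-1, n-1) + (q^(-m) - q^(-1-n))·G(m, n) = 0 for all integers m, n, together with G(m, m) = 0 and G(m, m-1) = 0 for all nonzero integers m. Then G is identically zero. -/
theorem stmt_4 (q : ℂ) (hq0 : q ≠ 0) (hq : ∀ n : ℤ, n ≠ 0 → q ^ n ≠ 1)
    (G : ℤ × ℤ → ℂ) (hfin : (Function.support G).Finite)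
    (hrec : ∀ m n : ℤ,
      (q ^ m - q ^ n) * G (m - 1, n - 1) + (q ^ (-m) - q ^ (-1 - n)) * G (m, n) = 0)
    (hdiag : ∀ m : ℤ, m ≠ 0 → G (m, m) = 0)
    (hdiag' : ∀ m : ℤ, m ≠ 0 → G (m, m - 1) = 0) :
    G = 0 := by
  -- q^a ≠ q^b for a ≠ b
  have hne : ∀ a b : ℤ, a ≠ b → q ^ a - q ^ b ≠ 0 := by
    intro a b hab h
    apply hq (a - b) (sub_ne_zero.mpr hab)
    have hb : q ^ b ≠ 0 := zpow_ne_zero _ hq0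
    rw [zpow_sub₀ hq0, div_eq_one_iff_eq hb]
    exact sub_eq_zero.mp h
  -- diagonal m = n
  have hd0 : ∀ m : ℤ, G (m, m) = 0 := by
    intro m
    have h := hrec m m
    have hc : q ^ (-m) - q ^ (-1 - m) ≠ 0 := hne _ _ (by omega)
    have : (q ^ (-m) - q ^ (-1 - m)) * G (m, m) = 0 := by
      have : q ^ m - q ^ m = 0 := sub_self _
      rw [this, zero_mul, zero_add] at h
      exact h
    exact (mul_eq_zero.mp this).resolve_left hc
  -- diagonal m = n + 1
  have hd1 : ∀ m : ℤ, G (m, m - 1) = 0 := by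
    intro m
    have h := hrec (m + 1) m
    have hz : q ^ (-(m + 1)) - q ^ (-1 - m) = 0 := by
      rw [show -(m + 1) = -1 - m by ring, sub_self]
    rw [hz, zero_mul, add_zero] at h
    have hc : q ^ (m + 1) - q ^ m ≠ 0 := hne _ _ (by omega)
    have := (mul_eq_zero.mp h).resolve_left hc
    simpa using this
  -- step: propagate nonzero support along the diagonal
  have hstep : ∀ m n : ℤ, m ≠ n → m ≠ n + 1 → G (m, n) ≠ 0 → G (m - 1, n - 1) ≠ 0 := by
    intro m n h1 h2 hGmn hzero
    have h := hrec m n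
    rw [hzero, mul_zero, zero_add] at h
    have hc : q ^ (-m) - q ^ (-1 - n) ≠ 0 := hne _ _ (by omega)
    exact hGmn ((mul_eq_zero.mp h).resolve_left hc)
  funext p
  obtain ⟨m, n⟩ := p
  by_contra hG
  have hGne : G (m, n) ≠ 0 := hG
  rcases eq_or_ne m n with rfl | h1
  · exact hGne (hd0 m)
  rcases eq_or_ne m (n + 1) with rfl | h2
  · exact hGne (by simpa using hd1 (n + 1))
  -- infinitely many support points
  set f : ℕ → ℤ × ℤ := fun k => (m - k, n - k) with hf
  have hmem : ∀ k : ℕ, G (f k) ≠ 0 := by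
    intro k
    induction k with
    | zero => simpa [hf] using hGne
    | succ k ih =>
      have h1' : m - (k : ℤ) ≠ n - k := by omega
      have h2' : m - (k : ℤ) ≠ n - k + 1 := by omega
      have := hstep _ _ h1' h2' ih
      have heq : f (k + 1) = (m - (k : ℤ) - 1, n - (k : ℤ) - 1) := by
        simp [hf]; constructor <;> push_cast <;> ring
      rw [heq]
      exact this
  have hinj : Function.Injective f := by
    intro a b hab
    have : (m - (a : ℤ), n - (a : ℤ)) = (m - b, n - b) := hab
    have := (Prod.mk.injEq _ _ _ _).mp this
    omega
  exact (Set.infinite_of_injective_forall_mem hinj hmem) hfin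
end

section
/- Let q be a nonzero complex number with q^n ≠ 1 for all nonzero integers n. Suppose a, b : ℤ × ℤ → ℂ both have finite support and satisfy, for all integers m, n: q^m·a(m, n-1) - a(m, n) = q^(-m)·b(m, n) - b(m, n-1). If additionally for some fixed m' the set {n : b(m', n) ≠ 0} is nonempty with minimum element n₀, then a(m', n) = 0 for all n < n₀ and q^(m')·a(m', n) = -b(m', n) for all integers n. -/
theorem stmt_5 (q : ℂ) (hq0 : q ≠ 0) (hq : ∀ n : ℤ, n ≠ 0 → q ^ n ≠ 1)
    (a b : ℤ × ℤ → ℂ)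
    (hfa : (Function.support a).Finite) (hfb : (Function.support b).Finite)
    (hrec : ∀ m n : ℤ,
      q ^ m * a (m, n - 1) - a (m, n) = q ^ (-m) * b (m, n) - b (m, n - 1))
    (m' n₀ : ℤ) (hleast : IsLeast {n : ℤ | b (m', n) ≠ 0} n₀) :
    (∀ n : ℤ, n < n₀ → a (m', n) = 0) ∧ (∀ n : ℤ, q ^ m' * a (m', n) = -b (m', n)) := by
  have hqm : q ^ m' ≠ 0 := zpow_ne_zero _ hq0
  set c : ℤ → ℂ := fun n => q ^ m' * a (m', n) + b (m', n) with hc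
  have hstep : ∀ n : ℤ, c n = q ^ m' * c (n - 1) := by
    intro n
    have h := hrec m' n
    have hinv : q ^ m' * q ^ (-m') = 1 := by
      rw [zpow_neg]; exact mul_inv_cancel₀ hqm
    simp only [hc]
    linear_combination (-(q ^ m')) * h + (-(b (m', n))) * hinv
  -- support of c is finite
  have hinj : Function.Injective (fun n : ℤ => ((m', n) : ℤ × ℤ)) := by
    intro x y h; simpa using h
  have hcfin : (Function.support c).Finite := by
    have : Function.support c ⊆ (fun n : ℤ => ((m', n) : ℤ × ℤ)) ⁻¹'
        (Function.support a ∪ Function.support b) := by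
      intro n hn
      simp only [Function.mem_support, hc] at hn
      by_contra hcon
      simp only [Set.mem_preimage, Set.mem_union, Function.mem_support, not_or,
        not_not] at hcon
      apply hn
      rw [hcon.1, hcon.2]; ring
    exact (((hfa.union hfb).preimage hinj.injOn)).subset this
  have hczero : ∀ n : ℤ, c n = 0 := by
    by_contra hcon
    push_neg at hcon
    obtain ⟨n, hn⟩ := hcon
    have hnat : ∀ k : ℕ, c (n + k) ≠ 0 := by
      intro k
      induction k with
      | zero => simpa using hn
      | succ j ih =>
        have := hstep (n + j + 1)
        simp only [add_sub_cancel_right] at this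
        have : c (n + (j + 1 : ℕ)) = q ^ m' * c (n + j) := by
          push_cast; rw [show n + ((j : ℤ) + 1) = (n + j) + 1 by ring, this]
        rw [this]
        exact mul_ne_zero hqm ih
    have hall : ∀ m : ℤ, n ≤ m → c m ≠ 0 := by
      intro m hm
      obtain ⟨k, rfl⟩ := exists_add_of_le hm
      have := hnat k.toNat
      rwa [Int.toNat_of_nonneg (by omega : (0:ℤ) ≤ k)] at this
    have hsub : Set.Ici n ⊆ Function.support c := fun m hm => hall m hm
    exact (Set.Ici_infinite n) (hcfin.subset hsub)
  constructor
  · intro n hn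
    have hb : b (m', n) = 0 := by
      by_contra hb
      exact absurd (hleast.2 hb) (not_le.mpr hn)
    have := hczero n
    simp only [hc, hb, add_zero] at this
    exact (mul_eq_zero.mp this).resolve_left hqm
  · intro n
    have := hczero n
    simp only [hc] at this
    linear_combination this
end

section
/- Let S be a Lie algebra over a field of characteristic zero, let V be an S-module, and let m be an element of an abelian group Γ grading both S and V (i.e. S = ⊕_{γ∈Γ} S_γ, V = ⊕_{γ∈Γ} V_γ with S_γ · V_δ ⊆ V_{γ+δ}). Suppose ρ ∈ S_0 acts on each homogeneous component V_γ and S_γ as multiplication by a scalar ρ(γ), depending additively on γ, and ρ(m) ≠ 0. Then every derivation D : S → V which is homogeneous of degree m (i.e. D(S_γ) ⊆ V_{γ+m}) is inner: D(x) = x · v for v = (1/ρ(m))·D(ρ). -/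
/-- Abstract version of Lemma 3.4: a homogeneous derivation of nonzero degree
into a graded module is inner. -/
theorem stmt_6 {k L M Γ : Type*} [Field k] [CharZero k]
    [LieRing L] [LieAlgebra k L]
    [AddCommGroup M] [Module k M] [LieRingModule L M] [LieModule k L M]
    [AddCommGroup Γ]
    (S : Γ → Submodule k L) (V : Γ → Submodule k M)
    (hsup : (⨆ γ : Γ, S γ) = ⊤)
    (hact : ∀ γ δ : Γ, ∀ x ∈ S γ, ∀ w ∈ V δ, ⁅x, w⁆ ∈ V (γ + δ))
    (ρ : L) (hρ : ρ ∈ S 0)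
    (c : Γ →+ k) (m : Γ) (hm : c m ≠ 0)
    (hρS : ∀ γ : Γ, ∀ x ∈ S γ, ⁅ρ, x⁆ = c γ • x)
    (hρV : ∀ γ : Γ, ∀ w ∈ V γ, ⁅ρ, w⁆ = c γ • w)
    (D : L →ₗ[k] M)
    (hD : ∀ x y : L, D ⁅x, y⁆ = ⁅x, D y⁆ - ⁅y, D x⁆)
    (hdeg : ∀ γ : Γ, ∀ x ∈ S γ, D x ∈ V (γ + m)) :
    ∀ x : L, D x = ⁅x, (c m)⁻¹ • D ρ⁆ := by
  set v : M := (c m)⁻¹ • D ρ with hv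
  -- key: for homogeneous x
  have key : ∀ γ : Γ, ∀ x ∈ S γ, D x = ⁅x, v⁆ := by
    intro γ x hx
    have h1 : D ⁅ρ, x⁆ = c γ • D x := by
      rw [hρS γ x hx, map_smul]
    have h2 : D ⁅ρ, x⁆ = ⁅ρ, D x⁆ - ⁅x, D ρ⁆ := hD ρ x
    have h3 : ⁅ρ, D x⁆ = c (γ + m) • D x := hρV (γ + m) _ (hdeg γ x hx)
    have h4 : ⁅x, D ρ⁆ = c m • D x := by
      have := h1.symm.trans h2
      rw [h3, map_add, add_smul] at this
      linear_combination (norm := module) this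
    rw [hv, lie_smul, h4, smul_smul, inv_mul_cancel₀ hm, one_smul]
  intro x
  have hx : x ∈ (⨆ γ : Γ, S γ) := hsup.symm ▸ Submodule.mem_top
  induction hx using Submodule.iSup_induction' with
  | mem γ y hy => exact key γ y hy
  | zero => simp
  | add y z _ _ hy hz => rw [map_add, hy, hz, add_lie]
end
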